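/- arXiv:1803.08906 — 2 statements merged into one kernel-verified Lean document; each statement's English description precedes it below -/
import Mathlib

section
/- Let Y be a very dense subset of a topological space X. Then the Krull dimension of Y (with the subspace topology) equals the Krull dimension of X. -/
open AlgebraicGeometry CategoryTheory CategoryTheory.Limits Topology

noncomputable section

namespace GOE

/-- A subset of a topological space is constructible if it is a finite union of
locally closed subsets. -/
def IsConstr {X : Type} [TopologicalSpace X] (C : Set X) : Prop :=
  ∃ (n : ℕ) (U Z : Fin n → Set X), (∀ i, IsOpen (U i)) ∧ (∀ i, IsClosed (Z i)) ∧
    C = ⋃ i, U i ∩ Z i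

/-- The spectrum of the field `K`, as a scheme. -/
abbrev SpecK (K : Type) [Field K] : Scheme := Spec (CommRingCat.of K)

/-- If `T ⊆ X` is preirreducible and `T ⊆ closure (T ∩ Y)`, then the preimage of `T`
in the subspace `Y` is preirreducible. -/
lemma aux_preirreducible {X : Type} [TopologicalSpace X] {Y : Set X} {T : Set X}
    (hT : IsPreirreducible T) (hdense : T ⊆ closure (T ∩ Y)) :
    IsPreirreducible ((Subtype.val : Y → X) ⁻¹' T) := by
  intro u v hu hv ⟨x, hxT, hxu⟩ ⟨y, hyT, hyv⟩
  rcases isOpen_induced_iff.1 hu with ⟨U, hU, rfl⟩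
  rcases isOpen_induced_iff.1 hv with ⟨V, hV, rfl⟩
  rcases hT U V hU hV ⟨x, hxT, hxu⟩ ⟨y, hyT, hyv⟩ with ⟨z, hzT, hzU, hzV⟩
  have hz := hdense hzT
  rcases mem_closure_iff.1 hz (U ∩ V) (hU.inter hV) ⟨hzU, hzV⟩ with
    ⟨w, ⟨hwU, hwV⟩, hwT, hwY⟩
  exact ⟨⟨w, hwY⟩, hwT, hwU, hwV⟩

open TopologicalSpace Order in
/-- Proposition 2.2. If `Y` is a very dense subset of a topological
space `X` (i.e. `F ∩ Y` is dense in `F` for every closed `F ⊆ X`), then the Krull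
dimension of `Y` with the subspace topology equals the Krull dimension of `X`. -/
theorem topologicalKrullDim_eq_of_veryDense
    {X : Type} [TopologicalSpace X] (Y : Set X)
    (hY : ∀ F : Set X, IsClosed F → F ⊆ closure (F ∩ Y)) :
    topologicalKrullDim Y = topologicalKrullDim X := by
  apply le_antisymm
  · -- map C ↦ closure (val '' C)
    apply krullDim_le_of_strictMono
      (fun C : IrreducibleCloseds Y =>
        (⟨closure (Subtype.val '' C.carrier),
          (C.isIrreducible'.image _ continuous_subtype_val.continuousOn).closure,
          isClosed_closure⟩ : IrreducibleCloseds X))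
    have key : ∀ C : IrreducibleCloseds Y,
        Subtype.val ⁻¹' closure (Subtype.val '' C.carrier) = C.carrier := by
      intro C
      rw [← IsEmbedding.subtypeVal.closure_eq_preimage_closure_image]
      exact C.isClosed'.closure_eq
    intro C₁ C₂ h
    constructor
    · exact closure_mono (Set.image_mono (le_of_lt h))
    · intro hle
      refine absurd ?_ (not_le_of_gt h)
      intro x hx
      have hmem : (x : X) ∈ closure (Subtype.val '' C₁.carrier) :=
        hle (subset_closure ⟨x, hx, rfl⟩)
      have := (key C₁) ▸ (Set.mem_preimage.2 hmem)
      exact this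
  · -- map F ↦ val ⁻¹' F
    apply krullDim_le_of_strictMono
      (fun F : IrreducibleCloseds X =>
        (⟨Subtype.val ⁻¹' F.carrier,
          ⟨by
            rcases F.isIrreducible'.1 with ⟨x, hx⟩
            have hx' := hY F.carrier F.isClosed' hx
            rcases mem_closure_iff.1 hx' Set.univ isOpen_univ trivial with
              ⟨y, _, hyF, hyY⟩
            exact ⟨⟨y, hyY⟩, hyF⟩,
           aux_preirreducible F.isIrreducible'.2 (hY F.carrier F.isClosed')⟩,
          F.isClosed'.preimage continuous_subtype_val⟩ : IrreducibleCloseds Y))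
    intro F₁ F₂ h
    constructor
    · have hle' : F₁.carrier ⊆ F₂.carrier := h.le
      exact fun x hx => hle' hx
    · intro hle
      refine absurd ?_ (not_le_of_gt h)
      intro x hx
      have hx' := hY F₂.carrier F₂.isClosed' hx
      have hsub : F₂.carrier ∩ Y ⊆ F₁.carrier := by
        rintro w ⟨hwF, hwY⟩
        exact hle (show (⟨w, hwY⟩ : Y) ∈ Subtype.val ⁻¹' F₂.carrier from hwF)
      have : x ∈ closure F₁.carrier := closure_mono hsub hx'
      rwa [F₁.isClosed'.closure_eq] at this

end GOE
end
end

section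
/- Let X be a Jacobson topological space and let C be a constructible subset of X. Then: (i) C (with the subspace topology) is Jacobson; (ii) the set C₀ of closed points of C equals C ∩ X₀, where X₀ is the set of closed points of X; (iii) the Krull dimensions satisfy dim(C) = dim(C₀) = dim(C ∩ X₀). -/
open AlgebraicGeometry CategoryTheory CategoryTheory.Limits Topology

noncomputable section

namespace GOE

variable {X : Type} [TopologicalSpace X]


lemma isConstr_inter_locallyClosed {C T : Set X} (hC : IsConstr C)
    (hT : IsLocallyClosed T) : IsConstr (C ∩ T) := by
  obtain ⟨n, U, Z, hU, hZ, rfl⟩ := hC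
  obtain ⟨O, F, hO, hF, rfl⟩ := hT
  refine ⟨n, fun i => U i ∩ O, fun i => Z i ∩ F, fun i => (hU i).inter hO,
    fun i => (hZ i).inter hF, ?_⟩
  rw [Set.iUnion_inter]
  apply Set.iUnion_congr
  intro i
  ext x
  simp only [Set.mem_inter_iff]; tauto

lemma isConstr_nonempty_inter [JacobsonSpace X] {C : Set X} (hC : IsConstr C)
    (hne : C.Nonempty) : (C ∩ closedPoints X).Nonempty := by
  obtain ⟨n, U, Z, hU, hZ, rfl⟩ := hC
  rw [Set.nonempty_iUnion] at hne
  obtain ⟨i, hi⟩ := hne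
  obtain ⟨x, hx, hx'⟩ := nonempty_inter_closedPoints hi ⟨U i, Z i, hU i, hZ i, rfl⟩
  exact ⟨x, Set.mem_iUnion.mpr ⟨i, hx⟩, hx'⟩

lemma isIrreducible_preimage_val {C S : Set X} (hS : S ⊆ C) (h : IsIrreducible S) :
    IsIrreducible ((Subtype.val : C → X) ⁻¹' S) := by
  obtain ⟨⟨x, hx⟩, h2⟩ := h
  constructor
  · exact ⟨⟨x, hS hx⟩, hx⟩
  · rintro U V hU hV ⟨⟨u, hu⟩, huS, huU⟩ ⟨⟨v, hv⟩, hvS, hvV⟩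
    obtain ⟨U₀, hU₀, rfl⟩ := isOpen_induced_iff.mp hU
    obtain ⟨V₀, hV₀, rfl⟩ := isOpen_induced_iff.mp hV
    obtain ⟨z, hzS, hzU, hzV⟩ := h2 U₀ V₀ hU₀ hV₀ ⟨u, huS, huU⟩ ⟨v, hvS, hvV⟩
    exact ⟨⟨z, hS hzS⟩, hzS, hzU, hzV⟩

/-- The map sending an irreducible closed subset of a very dense subset to its closure. -/
def icClosure {S : Set X} (G : TopologicalSpace.IrreducibleCloseds ↥S) :
    TopologicalSpace.IrreducibleCloseds X :=
  ⟨closure (Subtype.val '' (G : Set ↥S)),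
    (G.isIrreducible.image _ continuous_subtype_val.continuousOn).closure,
    isClosed_closure⟩

/-- A very dense subset has the same Krull dimension. -/
lemma krullDim_eq_of_veryDense {S : Set X}
    (hS : ∀ F : Set X, IsClosed F → closure (F ∩ S) = F) :
    topologicalKrullDim ↥S = topologicalKrullDim X := by
  have key : ∀ G : Set ↥S, IsClosed G →
      closure (Subtype.val '' G) ∩ S = Subtype.val '' G := by
    intro G hG
    obtain ⟨F, hF, rfl⟩ := isClosed_induced_iff.mp hG
    rw [Subtype.image_preimage_coe, Set.inter_comm S F]
    exact subset_antisymm (fun x hx => ⟨(closure_minimal Set.inter_subset_left hF) hx.1, hx.2⟩)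
      (Set.subset_inter subset_closure Set.inter_subset_right)
  apply le_antisymm
  · apply Order.krullDim_le_of_strictMono (icClosure (S := S))
    intro G G' hlt
    have hle : icClosure G ≤ icClosure G' :=
      SetLike.coe_subset_coe.mp (closure_mono (Set.image_mono (SetLike.coe_subset_coe.mpr hlt.le)))
    refine lt_of_le_of_ne hle fun heq => hlt.ne ?_
    have hcar : closure (Subtype.val '' (G : Set ↥S)) = closure (Subtype.val '' (G' : Set ↥S)) :=
      congrArg SetLike.coe heq
    have : Subtype.val '' (G : Set ↥S) = Subtype.val '' (G' : Set ↥S) := by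
      rw [← key _ G.isClosed, ← key _ G'.isClosed, hcar]
    exact TopologicalSpace.IrreducibleCloseds.ext
      (Set.image_injective.mpr Subtype.val_injective this)
  · refine Order.krullDim_le_of_strictMono (fun F : TopologicalSpace.IrreducibleCloseds X =>
      (⟨(Subtype.val : S → X) ⁻¹' (F : Set X), ?_,
        F.isClosed.preimage continuous_subtype_val⟩ :
        TopologicalSpace.IrreducibleCloseds ↥S)) ?_
    · have h1 : IsIrreducible ((F : Set X) ∩ S) := by
        rw [← isIrreducible_iff_closure, hS _ F.isClosed]
        exact F.isIrreducible
      have h2 := isIrreducible_preimage_val (Set.inter_subset_right) h1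
      have heq : (Subtype.val : S → X) ⁻¹' ((F : Set X) ∩ S) =
          (Subtype.val : S → X) ⁻¹' (F : Set X) := by
        ext x; simp [x.2]
      rwa [heq] at h2
    · intro F F' hlt
      have hle : (Subtype.val : S → X) ⁻¹' (F : Set X) ⊆ Subtype.val ⁻¹' (F' : Set X) :=
        Set.preimage_mono (SetLike.coe_subset_coe.mpr hlt.le)
      refine lt_of_le_of_ne hle fun heq => hlt.ne ?_
      have hcar : (Subtype.val : S → X) ⁻¹' (F : Set X) = Subtype.val ⁻¹' (F' : Set X) :=
        congrArg SetLike.coe heq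
      have h3 : (F : Set X) ∩ S = (F' : Set X) ∩ S := by
        rw [Set.inter_comm, Set.inter_comm (F' : Set X), ← Subtype.image_preimage_coe,
          ← Subtype.image_preimage_coe, hcar]
      apply TopologicalSpace.IrreducibleCloseds.ext
      rw [← hS _ F.isClosed, ← hS _ F'.isClosed, h3]


/-- Proposition 2.4. Let `X` be a Jacobson topological space and `C`
a constructible subset of `X`. Then (i) `C` is Jacobson; (ii) the closed points of `C`
are exactly `C ∩ X₀`; (iii) `dim C = dim C₀ = dim (C ∩ X₀)`. -/
theorem jacobson_constructible
    {X : Type} [TopologicalSpace X] [JacobsonSpace X]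
    (C : Set X) (hC : IsConstr C) :
    JacobsonSpace C ∧
    (Subtype.val '' closedPoints ↥C = C ∩ closedPoints X) ∧
    topologicalKrullDim ↥C = topologicalKrullDim ↥(closedPoints ↥C) ∧
    topologicalKrullDim ↥C = topologicalKrullDim ↥(C ∩ closedPoints X) := by
  have hjac : JacobsonSpace ↥C := by
    rw [jacobsonSpace_iff_locallyClosed]
    intro Z hZ hZ'
    obtain ⟨U, F, hU, hF, rfl⟩ := hZ'
    obtain ⟨U₀, hU₀, rfl⟩ := isOpen_induced_iff.mp hU
    obtain ⟨F₀, hF₀, rfl⟩ := isClosed_induced_iff.mp hF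
    have hconstr : IsConstr (C ∩ (U₀ ∩ F₀)) :=
      isConstr_inter_locallyClosed hC ⟨U₀, F₀, hU₀, hF₀, rfl⟩
    have hne : (C ∩ (U₀ ∩ F₀)).Nonempty := by
      obtain ⟨z, hz⟩ := hZ
      exact ⟨z.1, z.2, hz.1, hz.2⟩
    obtain ⟨x, hx, hx'⟩ := isConstr_nonempty_inter hconstr hne
    refine ⟨⟨x, hx.1⟩, ⟨hx.2.1, hx.2.2⟩, ?_⟩
    rw [mem_closedPoints_iff]
    have hsingle : ({⟨x, hx.1⟩} : Set ↥C) = Subtype.val ⁻¹' {x} := by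
      ext p; simp [Subtype.ext_iff]
    rw [hsingle]
    exact hx'.preimage continuous_subtype_val
  have hpts : Subtype.val '' closedPoints ↥C = C ∩ closedPoints X := by
    apply subset_antisymm
    · rintro _ ⟨⟨x, hxC⟩, hx, rfl⟩
      refine ⟨hxC, ?_⟩
      rw [mem_closedPoints_iff] at hx
      obtain ⟨F, hF, hFeq⟩ := isClosed_induced_iff.mp hx
      have h1 : C ∩ F = {x} := by
        rw [← Subtype.image_preimage_coe, hFeq, Set.image_singleton]
      have h2 : IsConstr ({x} : Set X) := by
        rw [← h1]; exact isConstr_inter_locallyClosed hC hF.isLocallyClosed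
      obtain ⟨y, hy, hy'⟩ := isConstr_nonempty_inter h2 ⟨x, rfl⟩
      rw [Set.mem_singleton_iff] at hy
      exact hy ▸ hy'
    · rintro x ⟨hxC, hx⟩
      refine ⟨⟨x, hxC⟩, ?_, rfl⟩
      rw [mem_closedPoints_iff]
      have hsingle : ({⟨x, hxC⟩} : Set ↥C) = Subtype.val ⁻¹' {x} := by
        ext p; simp [Subtype.ext_iff]
      rw [hsingle]
      exact (mem_closedPoints_iff.mp hx).preimage continuous_subtype_val
  have hd1 : topologicalKrullDim ↥C = topologicalKrullDim ↥(closedPoints ↥C) :=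
    (krullDim_eq_of_veryDense fun F hF => hjac.closure_inter_closedPoints hF).symm
  have hemb : Topology.IsEmbedding
      (fun p : ↥(closedPoints ↥C) => ((p : ↥C) : X)) :=
    Topology.IsEmbedding.subtypeVal.comp Topology.IsEmbedding.subtypeVal
  have hrange : Set.range (fun p : ↥(closedPoints ↥C) => ((p : ↥C) : X))
      = C ∩ closedPoints X := by
    have : (fun p : ↥(closedPoints ↥C) => ((p : ↥C) : X))
        = (Subtype.val ∘ Subtype.val) := rfl
    rw [this, Set.range_comp, Subtype.range_coe, hpts]
  have e : ↥(closedPoints ↥C) ≃ₜ ↥(C ∩ closedPoints X) :=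
    (hemb.toHomeomorph).trans (Homeomorph.setCongr hrange)
  have hd2 : topologicalKrullDim ↥(closedPoints ↥C)
      = topologicalKrullDim ↥(C ∩ closedPoints X) :=
    e.isHomeomorph.topologicalKrullDim_eq _
  exact ⟨hjac, hpts, hd1, hd1.trans hd2⟩


end GOE
end
end
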